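/- Let P be a non-commutative Poisson algebra over K and let x, y ∈ P with C(x) = C(y) (equal centralizers with respect to the bracket). Define N^k(x) = ker(ad_x^{k+1}) and N^k(y) = ker(ad_y^{k+1}). Then N^k(x) = N^k(y) for all k ≥ 0, and consequently N(x) = N(y). -/
import Mathlib


/-- A (possibly non-commutative) Poisson algebra structure on an associative
unital `K`-algebra `P`: a `K`-bilinear Lie bracket satisfying the Leibniz rule. -/
structure PoissonBracket (K P : Type*) [CommRing K] [Ring P] [Algebra K P] where
  bracket : P →ₗ[K] P →ₗ[K] P
  antisymm : ∀ x y : P, bracket x y = - bracket y x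
  jacobi : ∀ x y z : P,
    bracket x (bracket y z) = bracket (bracket x y) z + bracket y (bracket x z)
  leibniz : ∀ x y z : P, bracket x (y * z) = bracket x y * z + y * bracket x z

private lemma ker_pow_le {K P : Type*} [Field K] [AddCommGroup P] [Module K P]
    (f g : P →ₗ[K] P) (hc : Commute f g)
    (h : LinearMap.ker f ≤ LinearMap.ker g) :
    ∀ k : ℕ, LinearMap.ker (f ^ k) ≤ LinearMap.ker (g ^ k) := by
  intro k
  induction k with
  | zero => simp
  | succ k ih =>
    intro w hw
    have hw' : (f ^ (k + 1)) w = 0 := hw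
    have hfw : (f ^ k) (f w) = 0 := by
      have : (f ^ k * f) w = 0 := by rwa [pow_succ] at hw'
      simpa using this
    have h1 : (g ^ k) (f w) = 0 := ih hfw
    have h2 : f ((g ^ k) w) = 0 := by
      have hcp : f * g ^ k = g ^ k * f := (hc.pow_right k).eq
      have := congrArg (fun m : P →ₗ[K] P => m w) hcp
      simp only [Module.End.mul_apply] at this
      rw [this, h1]
    have h3 : g ((g ^ k) w) = 0 := h h2
    show (g ^ (k + 1)) w = 0
    rw [pow_succ']
    simpa using h3

/-- If `x, y` have equal centralizers `C(x) = C(y)` (kernels of `ad_x`, `ad_y`),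
then `ker (ad_x^{k+1}) = ker (ad_y^{k+1})` for all `k`, and `N(x) = N(y)`. -/
theorem stmt_6 {K P : Type*} [Field K] [CharZero K] [Ring P] [Algebra K P]
    (B : PoissonBracket K P) (x y : P)
    (h : LinearMap.ker (B.bracket x) = LinearMap.ker (B.bracket y)) :
    (∀ k : ℕ,
      LinearMap.ker (B.bracket x ^ (k + 1)) = LinearMap.ker (B.bracket y ^ (k + 1))) ∧
    {w : P | ∃ m : ℕ, (B.bracket x ^ m) w = 0} =
      {w : P | ∃ m : ℕ, (B.bracket y ^ m) w = 0} := by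
  set f := B.bracket x with hf
  set g := B.bracket y with hg
  -- {y, y} = 0
  have hyy : B.bracket y y = 0 := by
    have ha := B.antisymm y y
    have h2 : (2 : K) • B.bracket y y = 0 := by
      rw [two_smul]
      nth_rewrite 1 [ha]
      exact neg_add_cancel _
    have : (2 : K) ≠ 0 := two_ne_zero
    exact (smul_eq_zero.mp h2).resolve_left this
  -- hence y ∈ ker g = ker f, so {x, y} = 0
  have hxy : B.bracket x y = 0 := by
    have : y ∈ LinearMap.ker g := hyy
    rw [← h] at this
    exact this
  -- ad_x and ad_y commute
  have hc : Commute f g := by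
    apply LinearMap.ext
    intro w
    simp only [Module.End.mul_apply]
    have := B.jacobi x y w
    rw [hxy] at this
    simpa using this
  have hmain : ∀ k : ℕ, LinearMap.ker (f ^ k) = LinearMap.ker (g ^ k) := by
    intro k
    exact le_antisymm (ker_pow_le f g hc h.le k) (ker_pow_le g f hc.symm h.ge k)
  refine ⟨fun k => hmain (k + 1), ?_⟩
  ext w
  simp only [Set.mem_setOf_eq]
  constructor
  · rintro ⟨m, hm⟩
    exact ⟨m, (hmain m).le hm⟩
  · rintro ⟨m, hm⟩
    exact ⟨m, (hmain m).ge hm⟩
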